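/- arXiv:1911.08964 — 10 statements merged into one kernel-verified Lean document; each statement's English description precedes it below -/
import Mathlib

section
/- Let G = (V,E) be a graph and V = D ∪ P ∪ I a nice mds partition of G. Then every minimal vertex cover C of G with C ⊆ D ∪ P satisfies D ⊆ C. Consequently, there exists a minimal vertex cover C with D ⊆ C ⊆ D ∪ P. -/
variable {V : Type*} [Fintype V] [DecidableEq V]

/-- The set of endpoints of an edge set `M`, i.e. `V(M)`. -/
def mVerts (M : Finset (Sym2 V)) : Finset V :=
  Finset.univ.filter fun v => ∃ e ∈ M, v ∈ e

/-- `D ∪ M` is a mixed dominating set of `G`: every vertex outside `D ∪ V(M)` has a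
neighbor in `D`, and every edge outside `M` has an endpoint in `D ∪ V(M)`. -/
def IsMDS (G : SimpleGraph V) (D : Finset V) (M : Finset (Sym2 V)) : Prop :=
  (∀ e ∈ M, e ∈ G.edgeSet) ∧
  (∀ v : V, v ∉ D → v ∉ mVerts M → ∃ u ∈ D, G.Adj u v) ∧
  (∀ e ∈ G.edgeSet, e ∉ M → ∃ v, v ∈ e ∧ (v ∈ D ∨ v ∈ mVerts M))

/-- `v` is a private neighbor of `u ∈ D`: `v ∉ D ∪ V(M)` and `N(v) ∩ D = {u}`. -/
def PrivNbr (G : SimpleGraph V) (D : Finset V) (M : Finset (Sym2 V)) (u v : V) : Prop :=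
  v ∉ D ∧ v ∉ mVerts M ∧ G.Adj u v ∧ ∀ w ∈ D, G.Adj w v → w = u

/-- A nice mixed dominating set: additionally `D ∩ V(M) = ∅` and every `u ∈ D` has
at least two private neighbors. -/
def IsNiceMDS (G : SimpleGraph V) (D : Finset V) (M : Finset (Sym2 V)) : Prop :=
  IsMDS G D M ∧ Disjoint D (mVerts M) ∧
    ∀ u ∈ D, ∃ v₁ v₂, v₁ ≠ v₂ ∧ PrivNbr G D M u v₁ ∧ PrivNbr G D M u v₂

/-- `C` is a vertex cover of `G`. -/
def IsVC (G : SimpleGraph V) (C : Finset V) : Prop :=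
  ∀ ⦃v w : V⦄, G.Adj v w → v ∈ C ∨ w ∈ C

/-- For a nice mds partition `V = D ∪ P ∪ I`: every minimal vertex cover `C` of `G`
with `C ⊆ D ∪ P` satisfies `D ⊆ C`; consequently there is a minimal vertex cover `C`
with `D ⊆ C ⊆ D ∪ P`. -/
theorem stmt4 (G : SimpleGraph V) (D : Finset V) (M : Finset (Sym2 V))
    (h : IsNiceMDS G D M) :
    (∀ C : Finset V, IsVC G C → (∀ C' ⊂ C, ¬ IsVC G C') → C ⊆ D ∪ mVerts M → D ⊆ C) ∧
    (∃ C : Finset V, IsVC G C ∧ (∀ C' ⊂ C, ¬ IsVC G C') ∧ D ⊆ C ∧ C ⊆ D ∪ mVerts M) := by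
  classical
  obtain ⟨⟨hM, hdom, hcov⟩, hdisj, hpriv⟩ := h
  have part1 : ∀ C : Finset V, IsVC G C → C ⊆ D ∪ mVerts M → D ⊆ C := by
    intro C hVC hsub u hu
    by_contra hC
    obtain ⟨v₁, v₂, hne, ⟨hvD, hvM, hadj, _⟩, _⟩ := hpriv u hu
    rcases hVC hadj with h1 | h2
    · exact hC h1
    · rcases Finset.mem_union.mp (hsub h2) with h | h
      · exact hvD h
      · exact hvM h
  refine ⟨fun C hVC _ hsub => part1 C hVC hsub, ?_⟩
  -- D ∪ mVerts M is a vertex cover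
  have hVC0 : IsVC G (D ∪ mVerts M) := by
    intro v w hadj
    have he : s(v, w) ∈ G.edgeSet := hadj
    by_cases hm : s(v, w) ∈ M
    · left
      refine Finset.mem_union_right _ ?_
      simp only [mVerts, Finset.mem_filter, Finset.mem_univ, true_and]
      exact ⟨_, hm, Sym2.mem_mk_left v w⟩
    · obtain ⟨x, hx, hxm⟩ := hcov _ he hm
      rcases Sym2.mem_iff.mp hx with rfl | rfl
      · exact Or.inl (Finset.mem_union.mpr (hxm.imp id id))
      · exact Or.inr (Finset.mem_union.mpr (hxm.imp id id))
  -- pick a minimal-cardinality vertex cover inside D ∪ mVerts M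
  have hne : ((D ∪ mVerts M).powerset.filter fun C => IsVC G C).Nonempty :=
    ⟨D ∪ mVerts M, Finset.mem_filter.mpr ⟨Finset.mem_powerset.mpr (subset_refl _), hVC0⟩⟩
  obtain ⟨C, hCmem, hCmin⟩ :=
    Finset.exists_min_image _ (fun C => C.card) hne
  simp only [Finset.mem_filter, Finset.mem_powerset] at hCmem
  obtain ⟨hCsub, hCvc⟩ := hCmem
  refine ⟨C, hCvc, ?_, part1 C hCvc hCsub, hCsub⟩
  intro C' hC' hC'vc
  have hmem : C' ∈ (D ∪ mVerts M).powerset.filter fun C => IsVC G C := by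
    simp only [Finset.mem_filter, Finset.mem_powerset]
    exact ⟨hC'.subset.trans hCsub, hC'vc⟩
  exact absurd (hCmin C' hmem) (not_le.mpr (Finset.card_lt_card hC'))
end

section
/- For any graph G without isolated vertices, G has a mixed dominating set of size at most k if and only if G has a nice mixed dominating set of size at most k. -/
variable {V : Type*} [Fintype V] [DecidableEq V]

lemma mem_mVerts {M : Finset (Sym2 V)} {v : V} : v ∈ mVerts M ↔ ∃ e ∈ M, v ∈ e := by
  simp [mVerts]

lemma mVerts_mono {M M' : Finset (Sym2 V)} (h : M ⊆ M') : mVerts M ⊆ mVerts M' := by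
  intro v hv
  obtain ⟨e, he, hve⟩ := mem_mVerts.mp hv
  exact mem_mVerts.mpr ⟨e, h he, hve⟩

/-- Weight of an edge w.r.t. `D`: number of endpoints (with multiplicity) in `D`. -/
def wD (D : Finset V) : Sym2 V → ℕ :=
  Sym2.lift ⟨fun a b => (if a ∈ D then 1 else 0) + (if b ∈ D then 1 else 0),
    fun a b => add_comm _ _⟩

lemma wD_mk (D : Finset V) (a b : V) :
    wD D s(a,b) = (if a ∈ D then 1 else 0) + (if b ∈ D then 1 else 0) := rfl

lemma wD_le_two (D : Finset V) (e : Sym2 V) : wD D e ≤ 2 := by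
  induction e using Sym2.ind with
  | _ a b => rw [wD_mk]; split_ifs <;> omega

/-- The termination measure. -/
def phi (D : Finset V) (M : Finset (Sym2 V)) : ℕ :=
  (4 * Fintype.card (Sym2 V) + 4) * D.card + 2 * M.card + ∑ e ∈ M, wD D e

lemma sum_wD_le (D : Finset V) (M : Finset (Sym2 V)) : ∑ e ∈ M, wD D e ≤ 2 * M.card := by
  calc ∑ e ∈ M, wD D e ≤ ∑ _e ∈ M, 2 := Finset.sum_le_sum fun e _ => wD_le_two D e
  _ = 2 * M.card := by rw [Finset.sum_const, smul_eq_mul, mul_comm]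

lemma sum_insert_le' {α : Type*} [DecidableEq α] (f : α → ℕ) (a : α) (s : Finset α) :
    ∑ x ∈ insert a s, f x ≤ f a + ∑ x ∈ s, f x := by
  by_cases h : a ∈ s
  · rw [Finset.insert_eq_self.mpr h]; exact Nat.le_add_left _ _
  · rw [Finset.sum_insert h]

/-- One improvement step: a non-nice MDS can be replaced by an MDS of no larger size
with strictly smaller measure. -/
lemma step (G : SimpleGraph V) (hiso : ∀ v : V, ∃ w, G.Adj v w)
    (D : Finset V) (M : Finset (Sym2 V)) (hmds : IsMDS G D M)
    (hnot : ¬ IsNiceMDS G D M) :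
    ∃ (D' : Finset V) (M' : Finset (Sym2 V)), IsMDS G D' M' ∧
      D'.card + M'.card ≤ D.card + M.card ∧ phi D' M' < phi D M := by
  obtain ⟨hedges, hvert, hedge⟩ := hmds
  by_cases hdisj : Disjoint D (mVerts M)
  · -- Case B: some u ∈ D has fewer than two private neighbors
    have hpr : ¬ ∀ u ∈ D, ∃ v₁ v₂, v₁ ≠ v₂ ∧ PrivNbr G D M u v₁ ∧ PrivNbr G D M u v₂ :=
      fun h => hnot ⟨⟨hedges, hvert, hedge⟩, hdisj, h⟩
    push_neg at hpr
    obtain ⟨u, huD, hpriv⟩ := hpr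
    have hz : ∃ z, G.Adj u z ∧ ∀ v, PrivNbr G D M u v → v = z := by
      by_cases hp : ∃ v, PrivNbr G D M u v
      · obtain ⟨v, hv⟩ := hp
        exact ⟨v, hv.2.2.1, fun v' hv' => by
          by_contra hne
          exact hpriv v' v hne hv' hv⟩
      · obtain ⟨z, hz⟩ := hiso u
        exact ⟨z, hz, fun v hv => absurd ⟨v, hv⟩ hp⟩
    obtain ⟨z, hadj, hzuniq⟩ := hz
    refine ⟨D.erase u, insert s(u,z) M, ⟨?_, ?_, ?_⟩, ?_, ?_⟩
    · intro e he
      rcases Finset.mem_insert.mp he with rfl | he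
      · exact G.mem_edgeSet.mpr hadj
      · exact hedges e he
    · intro v hvD' hvM'
      have huM' : u ∈ mVerts (insert s(u,z) M) :=
        mem_mVerts.mpr ⟨s(u,z), Finset.mem_insert_self _ _, Sym2.mem_mk_left u z⟩
      have hzM' : z ∈ mVerts (insert s(u,z) M) :=
        mem_mVerts.mpr ⟨s(u,z), Finset.mem_insert_self _ _, Sym2.mem_mk_right u z⟩
      have hvu : v ≠ u := fun h => hvM' (h ▸ huM')
      have hvz : v ≠ z := fun h => hvM' (h ▸ hzM')
      have hvM : v ∉ mVerts M := fun h => hvM' (mVerts_mono (Finset.subset_insert _ _) h)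
      have hvD : v ∉ D := fun h => hvD' (Finset.mem_erase.mpr ⟨hvu, h⟩)
      obtain ⟨d, hdD, hdadj⟩ := hvert v hvD hvM
      by_cases hdu : d = u
      · subst hdu
        by_contra hno
        push_neg at hno
        have : PrivNbr G D M d v :=
          ⟨hvD, hvM, hdadj, fun w hw ha => by
            by_contra hwu
            exact hno w (Finset.mem_erase.mpr ⟨hwu, hw⟩) ha⟩
        exact hvz (hzuniq v this)
      · exact ⟨d, Finset.mem_erase.mpr ⟨hdu, hdD⟩, hdadj⟩
    · intro e he heM'
      have heM : e ∉ M := fun h => heM' (Finset.mem_insert_of_mem h)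
      obtain ⟨v, hve, hv⟩ := hedge e he heM
      rcases hv with hvD | hvM
      · by_cases hvu : v = u
        · subst hvu
          exact ⟨v, hve, Or.inr (mem_mVerts.mpr
            ⟨s(v,z), Finset.mem_insert_self _ _, Sym2.mem_mk_left v z⟩)⟩
        · exact ⟨v, hve, Or.inl (Finset.mem_erase.mpr ⟨hvu, hvD⟩)⟩
      · exact ⟨v, hve, Or.inr (mVerts_mono (Finset.subset_insert _ _) hvM)⟩
    · have h1 : (D.erase u).card + 1 = D.card := Finset.card_erase_add_one huD
      have h2 : (insert s(u,z) M).card ≤ M.card + 1 := Finset.card_insert_le _ _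
      omega
    · unfold phi
      have h1 : (D.erase u).card + 1 = D.card := Finset.card_erase_add_one huD
      have h2 : (insert s(u,z) M).card ≤ M.card + 1 := Finset.card_insert_le _ _
      have h3 : ∑ e ∈ insert s(u,z) M, wD (D.erase u) e ≤ 2 * Fintype.card (Sym2 V) := by
        calc ∑ e ∈ insert s(u,z) M, wD (D.erase u) e ≤ 2 * (insert s(u,z) M).card :=
              sum_wD_le _ _
        _ ≤ 2 * Fintype.card (Sym2 V) := by
              have := Finset.card_le_univ (insert s(u,z) M)
              omega
      have h4 : (4 * Fintype.card (Sym2 V) + 4) * D.card =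
          (4 * Fintype.card (Sym2 V) + 4) * (D.erase u).card +
          (4 * Fintype.card (Sym2 V) + 4) := by
        rw [← h1]; ring
      have h5 : (0:ℕ) ≤ ∑ e ∈ M, wD D e := Nat.zero_le _
      rw [h4]
      have hC : (0:ℕ) ≤ Fintype.card (Sym2 V) := Nat.zero_le _
      nlinarith [h2, h3, h5]
  · -- Case A: some u ∈ D ∩ V(M)
    obtain ⟨u, huD, huM⟩ := Finset.not_disjoint_iff.mp hdisj
    obtain ⟨e, heM, hue⟩ := mem_mVerts.mp huM
    obtain ⟨w, rfl⟩ := Sym2.mem_iff_exists.mp hue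
    have hadj : G.Adj u w := G.mem_edgeSet.mp (hedges _ heM)
    have hne : u ≠ w := hadj.ne
    by_cases hwD : w ∈ D
    · -- A1: both endpoints in D; delete the edge
      refine ⟨D, M.erase s(u,w), ⟨?_, ?_, ?_⟩, ?_, ?_⟩
      · exact fun e he => hedges e (Finset.erase_subset _ _ he)
      · intro v hvD hvM'
        have hvM : v ∉ mVerts M := by
          intro hv
          obtain ⟨g, hgM, hvg⟩ := mem_mVerts.mp hv
          by_cases hge : g = s(u,w)
          · subst hge
            rcases Sym2.mem_iff.mp hvg with rfl | rfl
            · exact hvD huD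
            · exact hvD hwD
          · exact hvM' (mem_mVerts.mpr ⟨g, Finset.mem_erase.mpr ⟨hge, hgM⟩, hvg⟩)
        exact hvert v hvD hvM
      · intro f hf hfM'
        by_cases hfe : f = s(u,w)
        · exact ⟨u, hfe ▸ Sym2.mem_mk_left u w, Or.inl huD⟩
        · have hfM : f ∉ M := fun h => hfM' (Finset.mem_erase.mpr ⟨hfe, h⟩)
          obtain ⟨v, hvf, hv⟩ := hedge f hf hfM
          rcases hv with hvD | hvM
          · exact ⟨v, hvf, Or.inl hvD⟩
          · obtain ⟨g, hgM, hvg⟩ := mem_mVerts.mp hvM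
            by_cases hge : g = s(u,w)
            · subst hge
              rcases Sym2.mem_iff.mp hvg with rfl | rfl
              · exact ⟨v, hvf, Or.inl huD⟩
              · exact ⟨v, hvf, Or.inl hwD⟩
            · exact ⟨v, hvf, Or.inr (mem_mVerts.mpr
                ⟨g, Finset.mem_erase.mpr ⟨hge, hgM⟩, hvg⟩)⟩
      · have := Finset.card_erase_le (s := M) (a := s(u,w))
        omega
      · unfold phi
        have h1 : (M.erase s(u,w)).card < M.card := Finset.card_erase_lt_of_mem heM
        have h2 : ∑ e ∈ M.erase s(u,w), wD D e ≤ ∑ e ∈ M, wD D e :=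
          Finset.sum_le_sum_of_subset (Finset.erase_subset _ _)
        omega
    · by_cases hx : ∃ x, G.Adj w x ∧ x ∉ D ∧ x ≠ u
      · -- A2: replace s(u,w) by s(w,x)
        obtain ⟨x, hwx, hxD, hxu⟩ := hx
        refine ⟨D, insert s(w,x) (M.erase s(u,w)), ⟨?_, ?_, ?_⟩, ?_, ?_⟩
        · intro g hg
          rcases Finset.mem_insert.mp hg with rfl | hg
          · exact G.mem_edgeSet.mpr hwx
          · exact hedges g (Finset.erase_subset _ _ hg)
        · intro v hvD hvM'
          have hwM' : w ∈ mVerts (insert s(w,x) (M.erase s(u,w))) :=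
            mem_mVerts.mpr ⟨s(w,x), Finset.mem_insert_self _ _, Sym2.mem_mk_left w x⟩
          have hvM : v ∉ mVerts M := by
            intro hv
            obtain ⟨g, hgM, hvg⟩ := mem_mVerts.mp hv
            by_cases hge : g = s(u,w)
            · subst hge
              rcases Sym2.mem_iff.mp hvg with rfl | rfl
              · exact hvD huD
              · exact hvM' hwM'
            · exact hvM' (mem_mVerts.mpr ⟨g,
                Finset.mem_insert_of_mem (Finset.mem_erase.mpr ⟨hge, hgM⟩), hvg⟩)
          exact hvert v hvD hvM
        · intro f hf hfM'
          have hwM' : w ∈ mVerts (insert s(w,x) (M.erase s(u,w))) :=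
            mem_mVerts.mpr ⟨s(w,x), Finset.mem_insert_self _ _, Sym2.mem_mk_left w x⟩
          by_cases hfe : f = s(u,w)
          · exact ⟨u, hfe ▸ Sym2.mem_mk_left u w, Or.inl huD⟩
          · have hfM : f ∉ M := fun h =>
              hfM' (Finset.mem_insert_of_mem (Finset.mem_erase.mpr ⟨hfe, h⟩))
            obtain ⟨v, hvf, hv⟩ := hedge f hf hfM
            rcases hv with hvD | hvM
            · exact ⟨v, hvf, Or.inl hvD⟩
            · obtain ⟨g, hgM, hvg⟩ := mem_mVerts.mp hvM
              by_cases hge : g = s(u,w)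
              · subst hge
                rcases Sym2.mem_iff.mp hvg with rfl | rfl
                · exact ⟨v, hvf, Or.inl huD⟩
                · exact ⟨v, hvf, Or.inr hwM'⟩
              · exact ⟨v, hvf, Or.inr (mem_mVerts.mpr ⟨g,
                  Finset.mem_insert_of_mem (Finset.mem_erase.mpr ⟨hge, hgM⟩), hvg⟩)⟩
        · have h1 : (M.erase s(u,w)).card + 1 = M.card := Finset.card_erase_add_one heM
          have h2 : (insert s(w,x) (M.erase s(u,w))).card ≤ (M.erase s(u,w)).card + 1 :=
            Finset.card_insert_le _ _
          omega
        · unfold phi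
          have h1 : (M.erase s(u,w)).card + 1 = M.card := Finset.card_erase_add_one heM
          have h2 : (insert s(w,x) (M.erase s(u,w))).card ≤ (M.erase s(u,w)).card + 1 :=
            Finset.card_insert_le _ _
          have hwv : wD D s(w,x) = 0 := by
            rw [wD_mk]; simp [hwD, hxD]
          have hwe : wD D s(u,w) = 1 := by
            rw [wD_mk]; simp [huD, hwD]
          have h3 : ∑ g ∈ insert s(w,x) (M.erase s(u,w)), wD D g ≤
              wD D s(w,x) + ∑ g ∈ M.erase s(u,w), wD D g := sum_insert_le' _ _ _
          have h4 : wD D s(u,w) + ∑ g ∈ M.erase s(u,w), wD D g = ∑ g ∈ M, wD D g :=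
            Finset.add_sum_erase M _ heM
          omega
      · -- A3: all neighbors of w are in D ∪ {u}; delete the edge
        push_neg at hx
        have hall : ∀ x, G.Adj w x → x ∉ D → x = u := hx
        refine ⟨D, M.erase s(u,w), ⟨?_, ?_, ?_⟩, ?_, ?_⟩
        · exact fun e he => hedges e (Finset.erase_subset _ _ he)
        · intro v hvD hvM'
          by_cases hvM : v ∈ mVerts M
          · obtain ⟨g, hgM, hvg⟩ := mem_mVerts.mp hvM
            by_cases hge : g = s(u,w)
            · subst hge
              rcases Sym2.mem_iff.mp hvg with rfl | rfl
              · exact absurd huD hvD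
              · exact ⟨u, huD, hadj⟩
            · exact absurd (mem_mVerts.mpr
                ⟨g, Finset.mem_erase.mpr ⟨hge, hgM⟩, hvg⟩) hvM'
          · exact hvert v hvD hvM
        · intro f hf hfM'
          by_cases hfe : f = s(u,w)
          · exact ⟨u, hfe ▸ Sym2.mem_mk_left u w, Or.inl huD⟩
          · have hfM : f ∉ M := fun h => hfM' (Finset.mem_erase.mpr ⟨hfe, h⟩)
            obtain ⟨v, hvf, hv⟩ := hedge f hf hfM
            rcases hv with hvD | hvM
            · exact ⟨v, hvf, Or.inl hvD⟩
            · obtain ⟨g, hgM, hvg⟩ := mem_mVerts.mp hvM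
              by_cases hge : g = s(u,w)
              · subst hge
                rcases Sym2.mem_iff.mp hvg with rfl | rfl
                · exact ⟨v, hvf, Or.inl huD⟩
                · -- v = w; use the other endpoint of f
                  obtain ⟨y, rfl⟩ := Sym2.mem_iff_exists.mp hvf
                  have hwy : G.Adj v y := G.mem_edgeSet.mp hf
                  by_cases hyD : y ∈ D
                  · exact ⟨y, Sym2.mem_mk_right v y, Or.inl hyD⟩
                  · have : y = u := hall y hwy hyD
                    subst this
                    exact absurd Sym2.eq_swap hfe
              · exact ⟨v, hvf, Or.inr (mem_mVerts.mpr
                  ⟨g, Finset.mem_erase.mpr ⟨hge, hgM⟩, hvg⟩)⟩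
        · have := Finset.card_erase_le (s := M) (a := s(u,w))
          omega
        · unfold phi
          have h1 : (M.erase s(u,w)).card < M.card := Finset.card_erase_lt_of_mem heM
          have h2 : ∑ e ∈ M.erase s(u,w), wD D e ≤ ∑ e ∈ M, wD D e :=
            Finset.sum_le_sum_of_subset (Finset.erase_subset _ _)
          omega

lemma toNice (G : SimpleGraph V) (hiso : ∀ v : V, ∃ w, G.Adj v w) :
    ∀ (n : ℕ) (D : Finset V) (M : Finset (Sym2 V)), phi D M ≤ n → IsMDS G D M →
      ∃ (D' : Finset V) (M' : Finset (Sym2 V)), IsNiceMDS G D' M' ∧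
        D'.card + M'.card ≤ D.card + M.card := by
  intro n
  induction n with
  | zero =>
    intro D M hphi hmds
    by_cases hnice : IsNiceMDS G D M
    · exact ⟨D, M, hnice, le_refl _⟩
    · obtain ⟨D', M', _, _, hlt⟩ := step G hiso D M hmds hnice
      omega
  | succ n ih =>
    intro D M hphi hmds
    by_cases hnice : IsNiceMDS G D M
    · exact ⟨D, M, hnice, le_refl _⟩
    · obtain ⟨D', M', hmds', hcard, hlt⟩ := step G hiso D M hmds hnice
      obtain ⟨D'', M'', hnice'', hcard''⟩ := ih D' M' (by omega) hmds'
      exact ⟨D'', M'', hnice'', le_trans hcard'' hcard⟩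

/-- For any graph without isolated vertices, there is a mixed dominating set of
size at most `k` iff there is a nice mixed dominating set of size at most `k`. -/
theorem stmt5 (G : SimpleGraph V) (hiso : ∀ v : V, ∃ w, G.Adj v w) (k : ℕ) :
    (∃ (D : Finset V) (M : Finset (Sym2 V)), IsMDS G D M ∧ D.card + M.card ≤ k) ↔
    (∃ (D : Finset V) (M : Finset (Sym2 V)), IsNiceMDS G D M ∧ D.card + M.card ≤ k) := by
  constructor
  · rintro ⟨D, M, hmds, hk⟩
    obtain ⟨D', M', hnice, hle⟩ := toNice G hiso (phi D M) D M (le_refl _) hmds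
    exact ⟨D', M', hnice, le_trans hle hk⟩
  · rintro ⟨D, M, hnice, hk⟩
    exact ⟨D, M, hnice.1, hk⟩
end

section
/- Let G be a graph with a mixed dominating set D ∪ M satisfying D ∩ V(M) = ∅, and suppose some u ∈ D has exactly one private neighbor v (i.e., exactly one vertex v ∈ V \ (D ∪ V(M)) with N(v) ∩ D = {u}). Then D' = D \ {u} together with M' = M ∪ {(u,v)} is also a mixed dominating set of G, of the same total size, still satisfying D' ∩ V(M') = ∅. -/
variable {V : Type*} [Fintype V] [DecidableEq V]

/-- If `D ∪ M` is a mixed dominating set with `D ∩ V(M) = ∅` and `u ∈ D` has exactly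
one private neighbor `v`, then `D \\ {u}` together with `M ∪ {(u,v)}` is a mixed
dominating set of the same total size, still with `D' ∩ V(M') = ∅`. -/
theorem stmt6 (G : SimpleGraph V) (D : Finset V) (M : Finset (Sym2 V))
    (h : IsMDS G D M) (hdisj : Disjoint D (mVerts M)) (u : V) (hu : u ∈ D) (v : V)
    (hp : PrivNbr G D M u v) (huniq : ∀ w, PrivNbr G D M u w → w = v) :
    IsMDS G (D.erase u) (insert s(u, v) M) ∧
    Disjoint (D.erase u) (mVerts (insert s(u, v) M)) ∧
    (D.erase u).card + (insert s(u, v) M).card = D.card + M.card := by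
  classical
  obtain ⟨hM, hdom, hcov⟩ := h
  obtain ⟨hvD, hvM, huv, hpriv⟩ := hp
  have memV : ∀ (N : Finset (Sym2 V)) (x : V), x ∈ mVerts N ↔ ∃ e ∈ N, x ∈ e := by
    intro N x; simp [mVerts]
  have hnew : s(u, v) ∉ M := fun hmem => hvM ((memV M v).2 ⟨_, hmem, by simp⟩)
  have hmemV' : ∀ x, x ∈ mVerts (insert s(u, v) M) ↔ x = u ∨ x = v ∨ x ∈ mVerts M := by
    intro x
    rw [memV]
    constructor
    · rintro ⟨e, he, hxe⟩
      rcases Finset.mem_insert.1 he with rfl | he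
      · rcases Sym2.mem_iff.1 hxe with rfl | rfl
        · exact Or.inl rfl
        · exact Or.inr (Or.inl rfl)
      · exact Or.inr (Or.inr ((memV M x).2 ⟨e, he, hxe⟩))
    · rintro (h1 | h1 | hx)
      · exact ⟨s(u, v), Finset.mem_insert_self _ _, by simp [h1]⟩
      · exact ⟨s(u, v), Finset.mem_insert_self _ _, by simp [h1]⟩
      · obtain ⟨e, he, hxe⟩ := (memV M x).1 hx
        exact ⟨e, Finset.mem_insert_of_mem he, hxe⟩
  refine ⟨⟨?_, ?_, ?_⟩, ?_, ?_⟩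
  · intro e he
    rcases Finset.mem_insert.1 he with rfl | he
    · exact huv
    · exact hM e he
  · intro x hxD hxM
    have hxu : x ≠ u := fun hx => hxM ((hmemV' x).2 (Or.inl hx))
    have hxv : x ≠ v := fun hx => hxM ((hmemV' x).2 (Or.inr (Or.inl hx)))
    have hxM0 : x ∉ mVerts M := fun hx => hxM ((hmemV' x).2 (Or.inr (Or.inr hx)))
    have hxD0 : x ∉ D := fun hx => hxD (Finset.mem_erase.2 ⟨hxu, hx⟩)
    obtain ⟨w, hw, hwx⟩ := hdom x hxD0 hxM0
    by_cases hwu : ∃ w' ∈ D, G.Adj w' x ∧ w' ≠ u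
    · obtain ⟨w', hw', hw'x, hne⟩ := hwu
      exact ⟨w', Finset.mem_erase.2 ⟨hne, hw'⟩, hw'x⟩
    · push_neg at hwu
      have : w = u := hwu w hw hwx
      subst this
      have : x = v := huniq x ⟨hxD0, hxM0, hwx, fun w' hw' hw'x => hwu w' hw' hw'x⟩
      exact absurd this hxv
  · intro e he hem
    have hem0 : e ∉ M := fun hx => hem (Finset.mem_insert_of_mem hx)
    obtain ⟨x, hxe, hx⟩ := hcov e he hem0
    rcases hx with hxD | hxM
    · by_cases hxu : x = u
      · exact ⟨x, hxe, Or.inr ((hmemV' x).2 (Or.inl hxu))⟩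
      · exact ⟨x, hxe, Or.inl (Finset.mem_erase.2 ⟨hxu, hxD⟩)⟩
    · exact ⟨x, hxe, Or.inr ((hmemV' x).2 (Or.inr (Or.inr hxM)))⟩
  · rw [Finset.disjoint_left]
    intro x hx hx'
    obtain ⟨hxu, hxD⟩ := Finset.mem_erase.1 hx
    rcases (hmemV' x).1 hx' with rfl | rfl | hxM
    · exact hxu rfl
    · exact hvD hxD
    · exact Finset.disjoint_left.1 hdisj hxD hxM
  · have h1 : (D.erase u).card = D.card - 1 := Finset.card_erase_of_mem hu
    have h2 : (insert s(u, v) M).card = M.card + 1 := Finset.card_insert_of_notMem hnew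
    have h3 : 1 ≤ D.card := Finset.card_pos.2 ⟨u, hu⟩
    omega
end

section
/- Let G be a graph without isolated vertices, with a mixed dominating set D ∪ M satisfying D ∩ V(M) = ∅. If some u ∈ D has no private neighbor and has a neighbor v ∉ D, then D \ {u} together with M ∪ {(u,v)} is a mixed dominating set of G of size at most |D| + |M|. -/
variable {V : Type*} [Fintype V] [DecidableEq V]

/-- If `G` has no isolated vertices, `D ∪ M` is a mixed dominating set with
`D ∩ V(M) = ∅`, and `u ∈ D` has no private neighbor but has a neighbor `v ∉ D`,
then `D \\ {u}` with `M ∪ {(u,v)}` is a mixed dominating set of size at most `|D| + |M|`. -/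
theorem stmt7 (G : SimpleGraph V) (hiso : ∀ x : V, ∃ y, G.Adj x y)
    (D : Finset V) (M : Finset (Sym2 V))
    (h : IsMDS G D M) (hdisj : Disjoint D (mVerts M)) (u : V) (hu : u ∈ D)
    (hnop : ∀ w, ¬ PrivNbr G D M u w) (v : V) (hadj : G.Adj u v) (hvD : v ∉ D) :
    IsMDS G (D.erase u) (insert s(u, v) M) ∧
    (D.erase u).card + (insert s(u, v) M).card ≤ D.card + M.card := by
  have hm : ∀ (N : Finset (Sym2 V)) (w : V), w ∈ mVerts N ↔ ∃ e ∈ N, w ∈ e := by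
    intro N w; simp [mVerts]
  obtain ⟨h1, h2, h3⟩ := h
  constructor
  · refine ⟨?_, ?_, ?_⟩
    · intro e he
      rcases Finset.mem_insert.mp he with rfl | he
      · exact hadj
      · exact h1 e he
    · intro w hwD hwM
      have hwu : w ≠ u := by
        intro hh
        exact hwM ((hm _ w).mpr ⟨s(u,v), Finset.mem_insert_self _ _, by simp [hh]⟩)
      have hwM' : w ∉ mVerts M := by
        intro hw
        rcases (hm M w).mp hw with ⟨e, he, hwe⟩
        exact hwM ((hm _ w).mpr ⟨e, Finset.mem_insert_of_mem he, hwe⟩)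
      have hwD' : w ∉ D := by
        intro hw
        exact hwD (Finset.mem_erase.mpr ⟨hwu, hw⟩)
      obtain ⟨x, hx, hxadj⟩ := h2 w hwD' hwM'
      by_cases hxu : x = u
      · subst hxu
        have := hnop w
        simp only [PrivNbr, not_and] at this
        have := this hwD' hwM' hxadj
        push_neg at this
        obtain ⟨y, hy, hyadj, hyu⟩ := this
        exact ⟨y, Finset.mem_erase.mpr ⟨hyu, hy⟩, hyadj⟩
      · exact ⟨x, Finset.mem_erase.mpr ⟨hxu, hx⟩, hxadj⟩
    · intro e he heM
      have heM' : e ∉ M := fun hh => heM (Finset.mem_insert_of_mem hh)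
      obtain ⟨x, hxe, hx⟩ := h3 e he heM'
      rcases hx with hx | hx
      · by_cases hxu : x = u
        · subst hxu
          exact ⟨x, hxe, Or.inr ((hm _ x).mpr ⟨s(x,v), Finset.mem_insert_self _ _, by simp⟩)⟩
        · exact ⟨x, hxe, Or.inl (Finset.mem_erase.mpr ⟨hxu, hx⟩)⟩
      · rcases (hm M x).mp hx with ⟨f, hf, hxf⟩
        exact ⟨x, hxe, Or.inr ((hm _ x).mpr ⟨f, Finset.mem_insert_of_mem hf, hxf⟩)⟩
  · have h1' : (D.erase u).card = D.card - 1 := Finset.card_erase_of_mem hu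
    have h2' : (insert s(u,v) M).card ≤ M.card + 1 := Finset.card_insert_le _ _
    have hD : 1 ≤ D.card := Finset.card_pos.mpr ⟨u, hu⟩
    omega
end

section
/- Let G be a graph without isolated vertices, with a mixed dominating set D ∪ M such that D ∩ V(M) = ∅, and suppose u ∈ D has no private neighbor and N(u) ⊆ D. Then (D \ {u}) ∪ M is a mixed dominating set of G of strictly smaller size. -/
variable {V : Type*} [Fintype V] [DecidableEq V]

/-- If `G` has no isolated vertices, `D ∪ M` is a mixed dominating set with
`D ∩ V(M) = ∅`, and `u ∈ D` has no private neighbor and `N(u) ⊆ D`, then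
`(D \\ {u}) ∪ M` is a mixed dominating set of strictly smaller size. -/
theorem stmt8 (G : SimpleGraph V) (hiso : ∀ x : V, ∃ y, G.Adj x y)
    (D : Finset V) (M : Finset (Sym2 V))
    (h : IsMDS G D M) (hdisj : Disjoint D (mVerts M)) (u : V) (hu : u ∈ D)
    (hnop : ∀ w, ¬ PrivNbr G D M u w) (hN : ∀ w, G.Adj u w → w ∈ D) :
    IsMDS G (D.erase u) M ∧ (D.erase u).card + M.card < D.card + M.card := by
  obtain ⟨h1, h2, h3⟩ := h
  refine ⟨⟨h1, ?_, ?_⟩, ?_⟩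
  · intro v hv hvM
    by_cases hvu : v = u
    · subst hvu
      obtain ⟨y, hy⟩ := hiso v
      refine ⟨y, Finset.mem_erase.2 ⟨fun hyv => G.loopless.irrefl v (hyv ▸ hy), hN y hy⟩, hy.symm⟩
    · have hvD : v ∉ D := fun hvD => hv (Finset.mem_erase.2 ⟨hvu, hvD⟩)
      obtain ⟨w, hwD, hwv⟩ := h2 v hvD hvM
      rcases eq_or_ne w u with rfl | hwu
      · exact absurd (hN v hwv) hvD
      · exact ⟨w, Finset.mem_erase.2 ⟨hwu, hwD⟩, hwv⟩
  · intro e he heM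
    obtain ⟨v, hve, hv⟩ := h3 e he heM
    rcases hv with hvD | hvM
    · rcases eq_or_ne v u with rfl | hvu
      · induction e with
        | h a b =>
          have hab : G.Adj a b := he
          simp only [Sym2.mem_iff] at hve
          rcases hve with rfl | rfl
          · exact ⟨b, Sym2.mem_mk_right _ _, Or.inl (Finset.mem_erase.2
              ⟨fun hb => G.loopless.irrefl v (hb ▸ hab), hN b hab⟩)⟩
          · exact ⟨a, Sym2.mem_mk_left _ _, Or.inl (Finset.mem_erase.2
              ⟨fun ha => G.loopless.irrefl v (ha ▸ hab.symm), hN a hab.symm⟩)⟩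
      · exact ⟨v, hve, Or.inl (Finset.mem_erase.2 ⟨hvu, hvD⟩)⟩
    · exact ⟨v, hve, Or.inr hvM⟩
  · have := Finset.card_erase_lt_of_mem hu
    omega
end

section
/- If D ∪ M is a mixed dominating set of a graph G, then D ∪ V(M) is a distance-2 dominating set of the incidence graph I(G) of G (the graph obtained by subdividing every edge of G once), where edges e ∈ M are identified with their subdivision vertices. -/
variable {V : Type*} [Fintype V] [DecidableEq V]

/-- The incidence graph (1-subdivision) of `G`: vertices are `V ⊕ Sym2 V`, with
`v` adjacent to `e` iff `e` is an edge of `G` and `v` is an endpoint of `e`.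
(Elements of `Sym2 V` that are not edges of `G` are isolated junk vertices.) -/
def incGraph {V : Type*} (G : SimpleGraph V) : SimpleGraph (V ⊕ Sym2 V) :=
  SimpleGraph.fromRel fun x y =>
    ∃ v e, x = Sum.inl v ∧ y = Sum.inr e ∧ e ∈ G.edgeSet ∧ v ∈ e

/-- `x` is within distance 2 of `s` in `H`. -/
def within2 {α : Type*} (H : SimpleGraph α) (s x : α) : Prop :=
  s = x ∨ H.Adj s x ∨ ∃ y, H.Adj s y ∧ H.Adj y x

lemma inc_adj {G : SimpleGraph V} {v : V} {e : Sym2 V}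
    (he : e ∈ G.edgeSet) (hv : v ∈ e) : (incGraph G).Adj (Sum.inl v) (Sum.inr e) := by
  rw [incGraph, SimpleGraph.fromRel_adj]
  exact ⟨by simp, Or.inl ⟨v, e, rfl, rfl, he, hv⟩⟩

/-- If `D ∪ M` is a mixed dominating set of `G`, then `D ∪ V(M)` (edges of `M`
identified with their subdivision vertices) is a distance-2 dominating set of the
incidence graph `I(G)`: every vertex of `I(G)` (i.e. every vertex of `G` and every
edge of `G`) is within distance 2 of `D ∪ M`. -/
theorem stmt9 (G : SimpleGraph V) (D : Finset V) (M : Finset (Sym2 V))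
    (h : IsMDS G D M) :
    (∀ v : V, ∃ s : V ⊕ Sym2 V,
      ((∃ d ∈ D, s = Sum.inl d) ∨ (∃ e ∈ M, s = Sum.inr e)) ∧
      within2 (incGraph G) s (Sum.inl v)) ∧
    (∀ e ∈ G.edgeSet, ∃ s : V ⊕ Sym2 V,
      ((∃ d ∈ D, s = Sum.inl d) ∨ (∃ f ∈ M, s = Sum.inr f)) ∧
      within2 (incGraph G) s (Sum.inr e)) := by
  obtain ⟨hM, hD, hE⟩ := h
  constructor
  · intro v
    by_cases hv : v ∈ D
    · exact ⟨Sum.inl v, Or.inl ⟨v, hv, rfl⟩, Or.inl rfl⟩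
    by_cases hv2 : v ∈ mVerts M
    · obtain ⟨e, heM, hve⟩ := by simpa [mVerts] using hv2
      exact ⟨Sum.inr e, Or.inr ⟨e, heM, rfl⟩, Or.inr (Or.inl (inc_adj (hM e heM) hve).symm)⟩
    · obtain ⟨u, huD, hadj⟩ := hD v hv hv2
      refine ⟨Sum.inl u, Or.inl ⟨u, huD, rfl⟩, Or.inr (Or.inr ⟨Sum.inr s(u,v), ?_, ?_⟩)⟩
      · exact inc_adj hadj (by simp)
      · exact (inc_adj hadj (by simp)).symm
  · intro e he
    by_cases heM : e ∈ M
    · exact ⟨Sum.inr e, Or.inr ⟨e, heM, rfl⟩, Or.inl rfl⟩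
    obtain ⟨v, hve, hvD⟩ := hE e he heM
    rcases hvD with hvD | hvM
    · exact ⟨Sum.inl v, Or.inl ⟨v, hvD, rfl⟩, Or.inr (Or.inl (inc_adj he hve))⟩
    · obtain ⟨f, hfM, hvf⟩ := by simpa [mVerts] using hvM
      exact ⟨Sum.inr f, Or.inr ⟨f, hfM, rfl⟩,
        Or.inr (Or.inr ⟨Sum.inl v, (inc_adj (hM f hfM) hvf).symm, inc_adj he hve⟩)⟩
end

section
/- Removing all leaves (vertices of degree 1) from a graph can increase the pathwidth by at most 1: if G' is obtained from G by deleting all degree-1 vertices and G' has pathwidth w, then G has pathwidth at most w + 1. -/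
/-- `G` has pathwidth at most `w`: there is a path decomposition all of whose bags
have size at most `w + 1`. -/
def pwLE {α : Type*} (G : SimpleGraph α) (w : ℕ) : Prop :=
  ∃ (n : ℕ) (bag : Fin n → Finset α),
    (∀ v : α, ∃ i, v ∈ bag i) ∧
    (∀ v v' : α, G.Adj v v' → ∃ i, v ∈ bag i ∧ v' ∈ bag i) ∧
    (∀ (v : α) (i j k : Fin n), i ≤ k → k ≤ j → v ∈ bag i → v ∈ bag j → v ∈ bag k) ∧
    (∀ i, (bag i).card ≤ w + 1)

lemma pwLE_of_fn {α : Type*} (G : SimpleGraph α) (w : ℕ) {ι : Type} [Fintype ι]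
    (f : ι → ℕ) (hf : Function.Injective f) (bag : ι → Finset α)
    (h1 : ∀ v, ∃ i, v ∈ bag i)
    (h2 : ∀ v v', G.Adj v v' → ∃ i, v ∈ bag i ∧ v' ∈ bag i)
    (h3 : ∀ (v : α) (i j k : ι), f i ≤ f k → f k ≤ f j → v ∈ bag i → v ∈ bag j → v ∈ bag k)
    (h4 : ∀ i, (bag i).card ≤ w + 1) : pwLE G w := by
  letI : LinearOrder ι := LinearOrder.lift' f hf
  let e := monoEquivOfFin ι rfl
  refine ⟨Fintype.card ι, fun i => bag (e i), ?_, ?_, ?_, fun i => h4 _⟩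
  · intro v; obtain ⟨i, hi⟩ := h1 v
    exact ⟨e.symm i, by simpa using hi⟩
  · intro v v' hvv; obtain ⟨i, hi, hi'⟩ := h2 v v' hvv
    exact ⟨e.symm i, by simpa using hi, by simpa using hi'⟩
  · intro v i j k hik hkj hvi hvj
    refine h3 v (e i) (e j) (e k) ?_ ?_ hvi hvj
    · exact (e.le_iff_le.mpr hik : e i ≤ e k)
    · exact (e.le_iff_le.mpr hkj : e k ≤ e j)

lemma block_mono {m i1 p1 i2 p2 : ℕ} (hp1 : p1 ≤ m) (hp2 : p2 ≤ m)
    (h : i1 * (m+1) + p1 ≤ i2 * (m+1) + p2) : i1 ≤ i2 := by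
  by_contra hc
  push_neg at hc
  have h2 : (i2+1) * (m+1) ≤ i1 * (m+1) := Nat.mul_le_mul_right _ hc
  have h3 : (i2+1)*(m+1) = i2*(m+1) + (m+1) := by ring
  omega

lemma block_lt {n m : ℕ} (i : Fin n) (p : Fin (m+1)) :
    i.val * (m+1) + p.val < n * (m+1) := by
  have hp := p.isLt
  have h2 : (i.val+1) * (m+1) ≤ n * (m+1) := Nat.mul_le_mul_right _ i.isLt
  have h3 : (i.val+1)*(m+1) = i.val*(m+1) + (m+1) := by ring
  omega

section
variable {V : Type*} [Fintype V] (G : SimpleGraph V) [DecidableRel G.Adj]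

noncomputable def nbr (x : V) : V :=
  if h : (G.neighborFinset x).Nonempty then h.choose else x

lemma adj_nbr {x : V} (hx : G.degree x = 1) : G.Adj x (nbr G x) := by
  have hne : (G.neighborFinset x).Nonempty := by
    rw [← Finset.card_pos, G.card_neighborFinset_eq_degree, hx]; norm_num
  have := hne.choose_spec
  rw [nbr, dif_pos hne]
  exact (SimpleGraph.mem_neighborFinset _ _ _).mp this

lemma eq_nbr {x y : V} (hx : G.degree x = 1) (hy : G.Adj x y) : y = nbr G x := by
  have hc : (G.neighborFinset x).card = 1 := by
    rw [G.card_neighborFinset_eq_degree, hx]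
  obtain ⟨u, hu⟩ := Finset.card_eq_one.mp hc
  have h1 : y ∈ G.neighborFinset x := (SimpleGraph.mem_neighborFinset _ _ _).mpr hy
  have h2 : nbr G x ∈ G.neighborFinset x :=
    (SimpleGraph.mem_neighborFinset _ _ _).mpr (adj_nbr G hx)
  rw [hu, Finset.mem_singleton] at h1 h2
  rw [h1, h2]

lemma nbr_nbr {x : V} (hx : G.degree x = 1) (hn : G.degree (nbr G x) = 1) :
    nbr G (nbr G x) = x :=
  (eq_nbr G hn (adj_nbr G hx).symm).symm

def mcard : ℕ := Fintype.card {y : V // G.degree y = 1}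

noncomputable def eLeaf : {y : V // G.degree y = 1} ≃ Fin (mcard G) := Fintype.equivFin _

noncomputable def posv (x : V) : ℕ :=
  if h : G.degree x = 1 then (eLeaf G ⟨x, h⟩ : ℕ) else 0

lemma posv_lt {x : V} (hx : G.degree x = 1) : posv G x < mcard G := by
  rw [posv, dif_pos hx]; exact (eLeaf G ⟨x, hx⟩).isLt

lemma posv_inj {x y : V} (hx : G.degree x = 1) (hy : G.degree y = 1)
    (h : posv G x = posv G y) : x = y := by
  rw [posv, dif_pos hx, posv, dif_pos hy] at h
  have h1 : eLeaf G ⟨x, hx⟩ = eLeaf G ⟨y, hy⟩ := Fin.ext h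
  have h2 := (eLeaf G).injective h1
  exact congrArg Subtype.val h2

lemma posv_eq {x : V} {q : ℕ} (hx : G.degree x = 1) (h : posv G x = q)
    (hq : q < mcard G) : x = ((eLeaf G).symm ⟨q, hq⟩ : V) := by
  rw [posv, dif_pos hx] at h
  have h1 : eLeaf G ⟨x, hx⟩ = ⟨q, hq⟩ := Fin.ext h
  have h2 := congrArg (eLeaf G).symm h1
  rw [Equiv.symm_apply_apply] at h2
  exact congrArg Subtype.val h2

open Classical in
noncomputable def gAsg (n : ℕ) (Bv : Fin n → Finset V) (x : V) : ℕ :=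
  if h : ∃ i : Fin n, nbr G x ∈ Bv i then (h.choose : ℕ) else 0

lemma gAsg_spec {n : ℕ} {Bv : Fin n → Finset V} {x : V}
    (h : ∃ i : Fin n, nbr G x ∈ Bv i) :
    ∃ hlt : gAsg G n Bv x < n, nbr G x ∈ Bv ⟨gAsg G n Bv x, hlt⟩ := by
  rw [gAsg, dif_pos h]
  exact ⟨h.choose.isLt, by simpa using h.choose_spec⟩

open Classical in
noncomputable def bigBag (n : ℕ) (Bv : Fin n → Finset V) :
    (Fin n × Fin (mcard G + 1)) ⊕ Fin (mcard G) → Finset V :=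
  Sum.elim
    (fun ip => Bv ip.1 ∪ Finset.univ.filter (fun x => G.degree x = 1 ∧
        posv G x + 1 = (ip.2 : ℕ) ∧ G.degree (nbr G x) ≠ 1 ∧ gAsg G n Bv x = (ip.1 : ℕ)))
    (fun q => Finset.univ.filter (fun x => G.degree x = 1 ∧ G.degree (nbr G x) = 1 ∧
        ((posv G x = (q : ℕ) ∧ posv G x < posv G (nbr G x)) ∨
         (posv G (nbr G x) = (q : ℕ) ∧ posv G (nbr G x) < posv G x))))

end

def fIdx (n m : ℕ) : (Fin n × Fin (m+1)) ⊕ Fin m → ℕ :=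
  Sum.elim (fun ip => ip.1 * (m+1) + ip.2) (fun q => n*(m+1)+q)

lemma fIdx_inj (n m : ℕ) : Function.Injective (fIdx n m) := by
  intro a b hab
  rcases a with ⟨i1, p1⟩ | q1 <;> rcases b with ⟨i2, p2⟩ | q2 <;>
    simp only [fIdx, Sum.elim_inl, Sum.elim_inr] at hab
  · have hp1 := p1.isLt; have hp2 := p2.isLt
    have hi : i1.val = i2.val := by
      have h1 : i1.val ≤ i2.val := block_mono (by omega) (by omega) (le_of_eq hab)
      have h1' : i2.val ≤ i1.val := block_mono (by omega) (by omega) (le_of_eq hab.symm)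
      omega
    have hmul : i1.val * (m+1) = i2.val * (m+1) := by rw [hi]
    have hp : p1.val = p2.val := by omega
    simp [Prod.ext_iff, Fin.ext_iff, hi, hp]
  · exfalso; have h1 := block_lt i1 p1; omega
  · exfalso; have h1 := block_lt i2 p2; omega
  · simp [Fin.ext_iff]; omega

/-- Removing all leaves (degree-1 vertices) from a graph increases pathwidth by at
most one: if the graph induced on non-leaves has pathwidth at most `w`, then `G`
has pathwidth at most `w + 1`. -/
theorem stmt13 {V : Type*} [Fintype V] (G : SimpleGraph V) [DecidableRel G.Adj]
    (w : ℕ) (h : pwLE (SimpleGraph.induce {v : V | G.degree v ≠ 1} G) w) :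
    pwLE G (w + 1) := by
  classical
  obtain ⟨n, B, hBcov, hBedge, hBint, hBcard⟩ := h
  set Bv : Fin n → Finset V := fun i => (B i).image Subtype.val with hBvdef
  have hBv_mem : ∀ (x : V) (i : Fin n),
      x ∈ Bv i ↔ ∃ hx : G.degree x ≠ 1, (⟨x, hx⟩ : {v : V | G.degree v ≠ 1}) ∈ B i := by
    intro x i
    simp only [hBvdef, Finset.mem_image]
    constructor
    · rintro ⟨a, ha, rfl⟩; exact ⟨a.2, by simpa using ha⟩
    · rintro ⟨hx, hmem⟩; exact ⟨⟨x, hx⟩, hmem, rfl⟩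
  have hBv_not_leaf : ∀ (x : V) (i : Fin n), x ∈ Bv i → G.degree x ≠ 1 := by
    intro x i hx; exact ((hBv_mem x i).mp hx).choose
  have hBv_card : ∀ i, (Bv i).card ≤ w + 1 := by
    intro i; exact le_trans Finset.card_image_le (hBcard i)
  have hBv_int : ∀ (x : V) (a b c : Fin n), a ≤ c → c ≤ b →
      x ∈ Bv a → x ∈ Bv b → x ∈ Bv c := by
    intro x a b c hac hcb hxa hxb
    obtain ⟨hx, ha⟩ := (hBv_mem x a).mp hxa
    obtain ⟨hx', hb⟩ := (hBv_mem x b).mp hxb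
    exact (hBv_mem x c).mpr ⟨hx, hBint ⟨x, hx⟩ a b c hac hcb ha hb⟩
  have hBv_cov : ∀ x : V, G.degree x ≠ 1 → ∃ i, x ∈ Bv i := by
    intro x hx
    obtain ⟨i, hi⟩ := hBcov ⟨x, hx⟩
    exact ⟨i, (hBv_mem x i).mpr ⟨hx, hi⟩⟩
  have hmem_inl : ∀ (x : V) (i : Fin n) (p : Fin (mcard G + 1)),
      x ∈ bigBag G n Bv (Sum.inl (i, p)) ↔
        (x ∈ Bv i ∨ (G.degree x = 1 ∧ posv G x + 1 = (p : ℕ) ∧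
          G.degree (nbr G x) ≠ 1 ∧ gAsg G n Bv x = (i : ℕ))) := by
    intro x i p; simp [bigBag]
  have hmem_inr : ∀ (x : V) (q : Fin (mcard G)),
      x ∈ bigBag G n Bv (Sum.inr q) ↔
        (G.degree x = 1 ∧ G.degree (nbr G x) = 1 ∧
          ((posv G x = (q : ℕ) ∧ posv G x < posv G (nbr G x)) ∨
           (posv G (nbr G x) = (q : ℕ) ∧ posv G (nbr G x) < posv G x))) := by
    intro x q; simp [bigBag]
  refine pwLE_of_fn G (w+1) (fIdx n (mcard G)) (fIdx_inj n (mcard G)) (bigBag G n Bv)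
    ?_ ?_ ?_ ?_
  · -- cover
    intro v
    by_cases hv : G.degree v = 1
    · by_cases hnv : G.degree (nbr G v) = 1
      · have hvv : v ≠ nbr G v := G.ne_of_adj (adj_nbr G hv)
        have hne : posv G v ≠ posv G (nbr G v) := fun hh => hvv (posv_inj G hv hnv hh)
        rcases lt_or_gt_of_ne hne with hlt | hlt
        · exact ⟨Sum.inr ⟨posv G v, posv_lt G hv⟩,
            (hmem_inr _ _).mpr ⟨hv, hnv, Or.inl ⟨rfl, hlt⟩⟩⟩
        · exact ⟨Sum.inr ⟨posv G (nbr G v), posv_lt G hnv⟩,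
            (hmem_inr _ _).mpr ⟨hv, hnv, Or.inr ⟨rfl, hlt⟩⟩⟩
      · obtain ⟨hlt, -⟩ := gAsg_spec G (hBv_cov _ hnv)
        exact ⟨Sum.inl (⟨gAsg G n Bv v, hlt⟩, ⟨posv G v + 1, by have := posv_lt G hv; omega⟩),
          (hmem_inl _ _ _).mpr (Or.inr ⟨hv, rfl, hnv, rfl⟩)⟩
    · obtain ⟨i, hi⟩ := hBv_cov v hv
      exact ⟨Sum.inl (i, 0), (hmem_inl _ _ _).mpr (Or.inl hi)⟩
  · -- edges
    have hedge_mixed : ∀ v v' : V, G.Adj v v' → G.degree v = 1 → G.degree v' ≠ 1 →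
        ∃ k, v ∈ bigBag G n Bv k ∧ v' ∈ bigBag G n Bv k := by
      intro v v' hadj hv hv'
      have hvn : v' = nbr G v := eq_nbr G hv hadj
      have hnv : G.degree (nbr G v) ≠ 1 := hvn ▸ hv'
      obtain ⟨hlt, hmem⟩ := gAsg_spec G (hBv_cov _ hnv)
      refine ⟨Sum.inl (⟨gAsg G n Bv v, hlt⟩, ⟨posv G v + 1, by have := posv_lt G hv; omega⟩),
        ?_, ?_⟩
      · exact (hmem_inl _ _ _).mpr (Or.inr ⟨hv, rfl, hnv, rfl⟩)
      · exact (hmem_inl _ _ _).mpr (Or.inl (hvn ▸ hmem))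
    intro v v' hadj
    by_cases hv : G.degree v = 1
    · by_cases hv' : G.degree v' = 1
      · have hvn : v' = nbr G v := eq_nbr G hv hadj
        have hvn' : v = nbr G v' := eq_nbr G hv' hadj.symm
        have hnbv : G.degree (nbr G v) = 1 := by rw [← hvn]; exact hv'
        have hnbv' : G.degree (nbr G v') = 1 := by rw [← hvn']; exact hv
        have hvv : v ≠ v' := G.ne_of_adj hadj
        have hne : posv G v ≠ posv G v' := fun hh => hvv (posv_inj G hv hv' hh)
        rcases lt_or_gt_of_ne hne with hlt | hlt
        · refine ⟨Sum.inr ⟨posv G v, posv_lt G hv⟩, ?_, ?_⟩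
          · exact (hmem_inr _ _).mpr ⟨hv, hnbv, Or.inl ⟨rfl, by rw [← hvn]; exact hlt⟩⟩
          · exact (hmem_inr _ _).mpr ⟨hv', hnbv', Or.inr ⟨by rw [← hvn'], by rw [← hvn']; exact hlt⟩⟩
        · refine ⟨Sum.inr ⟨posv G v', posv_lt G hv'⟩, ?_, ?_⟩
          · exact (hmem_inr _ _).mpr ⟨hv, hnbv, Or.inr ⟨by rw [← hvn], by rw [← hvn]; exact hlt⟩⟩
          · exact (hmem_inr _ _).mpr ⟨hv', hnbv', Or.inl ⟨rfl, by rw [← hvn']; exact hlt⟩⟩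
      · exact hedge_mixed v v' hadj hv hv'
    · by_cases hv' : G.degree v' = 1
      · obtain ⟨k, h1, h2⟩ := hedge_mixed v' v hadj.symm hv' hv
        exact ⟨k, h2, h1⟩
      · have hadj' : (SimpleGraph.induce {v : V | G.degree v ≠ 1} G).Adj ⟨v, hv⟩ ⟨v', hv'⟩ := hadj
        obtain ⟨i, h1, h2⟩ := hBedge _ _ hadj'
        exact ⟨Sum.inl (i, 0),
          (hmem_inl _ _ _).mpr (Or.inl ((hBv_mem _ _).mpr ⟨hv, h1⟩)),
          (hmem_inl _ _ _).mpr (Or.inl ((hBv_mem _ _).mpr ⟨hv', h2⟩))⟩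
  · -- interval
    intro v i j k hik hkj hvi hvj
    by_cases hv : G.degree v = 1
    · have huniq : ∀ a b, v ∈ bigBag G n Bv a → v ∈ bigBag G n Bv b → a = b := by
        intro a b ha hb
        by_cases hnv : G.degree (nbr G v) = 1
        · rcases a with ⟨ia, pa⟩ | qa
          · rw [hmem_inl] at ha
            rcases ha with ha | ha
            · exact absurd hv (hBv_not_leaf _ _ ha)
            · exact absurd hnv ha.2.2.1
          · rcases b with ⟨ib, pb⟩ | qb
            · rw [hmem_inl] at hb
              rcases hb with hb | hb
              · exact absurd hv (hBv_not_leaf _ _ hb)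
              · exact absurd hnv hb.2.2.1
            · rw [hmem_inr] at ha hb
              have : (qa : ℕ) = (qb : ℕ) := by
                rcases ha.2.2 with ⟨h1, h2⟩ | ⟨h1, h2⟩ <;>
                  rcases hb.2.2 with ⟨h3, h4⟩ | ⟨h3, h4⟩ <;> omega
              exact congrArg Sum.inr (Fin.ext this)
        · rcases a with ⟨ia, pa⟩ | qa
          swap
          · rw [hmem_inr] at ha; exact absurd ha.2.1 hnv
          rcases b with ⟨ib, pb⟩ | qb
          swap
          · rw [hmem_inr] at hb; exact absurd hb.2.1 hnv
          rw [hmem_inl] at ha hb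
          rcases ha with ha | ha
          · exact absurd hv (hBv_not_leaf _ _ ha)
          rcases hb with hb | hb
          · exact absurd hv (hBv_not_leaf _ _ hb)
          have h1 : (ia : ℕ) = (ib : ℕ) := by omega
          have h2 : (pa : ℕ) = (pb : ℕ) := by omega
          exact congrArg Sum.inl (Prod.ext (Fin.ext h1) (Fin.ext h2))
      have hij : i = j := huniq i j hvi hvj
      rw [hij] at hik
      have hfk : fIdx n (mcard G) k = fIdx n (mcard G) j := le_antisymm hkj hik
      rw [fIdx_inj n (mcard G) hfk, ← hij]
      exact hvi
    · have hbag : ∀ c, v ∈ bigBag G n Bv c →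
          ∃ ip : Fin n × Fin (mcard G + 1), c = Sum.inl ip ∧ v ∈ Bv ip.1 := by
        intro c hc
        rcases c with ⟨ic, pc⟩ | qc
        · rw [hmem_inl] at hc
          rcases hc with hc | hc
          · exact ⟨(ic, pc), rfl, hc⟩
          · exact absurd hc.1 hv
        · rw [hmem_inr] at hc; exact absurd hc.1 hv
      obtain ⟨⟨ia, pa⟩, rfl, hva⟩ := hbag i hvi
      obtain ⟨⟨ib, pb⟩, rfl, hvb⟩ := hbag j hvj
      rcases k with ⟨ic, pc⟩ | qc
      · simp only [fIdx, Sum.elim_inl] at hik hkj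
        have h1 : ia ≤ ic := by
          have := block_mono (Nat.lt_succ_iff.mp pa.isLt) (Nat.lt_succ_iff.mp pc.isLt) hik
          exact this
        have h2 : ic ≤ ib := by
          exact block_mono (Nat.lt_succ_iff.mp pc.isLt) (Nat.lt_succ_iff.mp pb.isLt) hkj
        exact (hmem_inl _ _ _).mpr (Or.inl (hBv_int v ia ib ic h1 h2 hva hvb))
      · exfalso
        simp only [fIdx, Sum.elim_inl, Sum.elim_inr] at hkj
        have := block_lt ib pb
        omega
  · -- cards
    intro k
    rcases k with ⟨i, p⟩ | q
    · show ((bigBag G n Bv) (Sum.inl (i, p))).card ≤ (w + 1) + 1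
      simp only [bigBag, Sum.elim_inl]
      refine le_trans (Finset.card_union_le _ _) ?_
      have h1 := hBv_card i
      have h2 : (Finset.univ.filter (fun x => G.degree x = 1 ∧
          posv G x + 1 = (p : ℕ) ∧ G.degree (nbr G x) ≠ 1 ∧
          gAsg G n Bv x = (i : ℕ))).card ≤ 1 := by
        refine Finset.card_le_one.mpr ?_
        intro a ha b hb
        simp only [Finset.mem_filter, Finset.mem_univ, true_and] at ha hb
        exact posv_inj G ha.1 hb.1 (by omega)
      omega
    · show ((bigBag G n Bv) (Sum.inr q)).card ≤ (w + 1) + 1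
      simp only [bigBag, Sum.elim_inr]
      set t : V := ((eLeaf G).symm ⟨(q : ℕ), q.isLt⟩ : V) with ht
      have hsub : (Finset.univ.filter (fun x => G.degree x = 1 ∧ G.degree (nbr G x) = 1 ∧
          ((posv G x = (q : ℕ) ∧ posv G x < posv G (nbr G x)) ∨
           (posv G (nbr G x) = (q : ℕ) ∧ posv G (nbr G x) < posv G x)))) ⊆ {t, nbr G t} := by
        intro x hx
        simp only [Finset.mem_filter, Finset.mem_univ, true_and] at hx
        obtain ⟨hx1, hx2, hx3⟩ := hx
        rcases hx3 with ⟨h1, -⟩ | ⟨h1, -⟩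
        · have : x = t := posv_eq G hx1 h1 q.isLt
          simp [this]
        · have hnx : nbr G x = t := posv_eq G hx2 h1 q.isLt
          have : x = nbr G t := by rw [← hnx, nbr_nbr G hx1 hx2]
          simp [this]
      have hc := Finset.card_le_card hsub
      have hc2 : ({t, nbr G t} : Finset V).card ≤ 2 := by
        refine le_trans (Finset.card_insert_le _ _) ?_
        simp
      omega
end

section
/- Let G = (V,E) be a graph with an edge dominating set of size k, and let G' be obtained from G by adding a new vertex u adjacent to all of V, and attaching |V| + 2 new leaves to u. Then G has an edge dominating set of size k if and only if G' has a mixed dominating set of size k + 1. -/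
variable {V : Type*} [Fintype V] [DecidableEq V]

/-- `M` is an edge dominating set of `G`: every edge shares an endpoint with some
edge of `M`. -/
def IsEDS (G : SimpleGraph V) (M : Finset (Sym2 V)) : Prop :=
  (∀ e ∈ M, e ∈ G.edgeSet) ∧
  ∀ e ∈ G.edgeSet, ∃ f ∈ M, ∃ v : V, v ∈ e ∧ v ∈ f

/-- The graph `G'` obtained from `G` by adding a new universal vertex `u`
(`Sum.inr (Sum.inl ())`) adjacent to all of `V` and attaching `|V| + 2` new leaves
to `u`. -/
def extG (G : SimpleGraph V) : SimpleGraph (V ⊕ (Unit ⊕ Fin (Fintype.card V + 2))) :=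
  SimpleGraph.fromRel fun x y =>
    (∃ a b, x = Sum.inl a ∧ y = Sum.inl b ∧ G.Adj a b) ∨ x = Sum.inr (Sum.inl ())

def uu (V : Type*) [Fintype V] : V ⊕ (Unit ⊕ Fin (Fintype.card V + 2)) :=
  Sum.inr (Sum.inl ())

lemma ext_adj_iff (G : SimpleGraph V) (x y : V ⊕ (Unit ⊕ Fin (Fintype.card V + 2))) :
    (extG G).Adj x y ↔ x ≠ y ∧
      ((∃ a b, x = Sum.inl a ∧ y = Sum.inl b ∧ G.Adj a b) ∨ x = uu V ∨ y = uu V) := by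
  rw [extG, SimpleGraph.fromRel_adj]
  constructor
  · rintro ⟨hne, h | h⟩
    · rcases h with ⟨a, b, rfl, rfl, hab⟩ | rfl
      · exact ⟨hne, Or.inl ⟨a, b, rfl, rfl, hab⟩⟩
      · exact ⟨hne, Or.inr (Or.inl rfl)⟩
    · rcases h with ⟨a, b, rfl, rfl, hab⟩ | rfl
      · exact ⟨hne, Or.inl ⟨b, a, rfl, rfl, hab.symm⟩⟩
      · exact ⟨hne, Or.inr (Or.inr rfl)⟩
  · rintro ⟨hne, h⟩
    rcases h with ⟨a, b, rfl, rfl, hab⟩ | rfl | rfl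
    · exact ⟨hne, Or.inl (Or.inl ⟨a, b, rfl, rfl, hab⟩)⟩
    · exact ⟨hne, Or.inl (Or.inr rfl)⟩
    · exact ⟨hne, Or.inr (Or.inr rfl)⟩

lemma ext_adj_inl_inl (G : SimpleGraph V) (a b : V) :
    (extG G).Adj (Sum.inl a) (Sum.inl b) ↔ G.Adj a b := by
  rw [ext_adj_iff]
  constructor
  · rintro ⟨hne, ⟨a', b', ha, hb, hab⟩ | h | h⟩
    · cases ha; cases hb; exact hab
    · simp [uu] at h
    · simp [uu] at h
  · intro hab
    exact ⟨by simp [hab.ne], Or.inl ⟨a, b, rfl, rfl, hab⟩⟩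

lemma ext_adj_uu (G : SimpleGraph V) (y : V ⊕ (Unit ⊕ Fin (Fintype.card V + 2)))
    (hy : y ≠ uu V) : (extG G).Adj (uu V) y := by
  rw [ext_adj_iff]
  exact ⟨fun h => hy h.symm, Or.inr (Or.inl rfl)⟩

lemma ext_adj_leaf (G : SimpleGraph V) {x : V ⊕ (Unit ⊕ Fin (Fintype.card V + 2))}
    {ℓ : Fin (Fintype.card V + 2)} (h : (extG G).Adj x (Sum.inr (Sum.inr ℓ))) : x = uu V := by
  rw [ext_adj_iff] at h
  rcases h with ⟨hne, ⟨a, b, _, hb, _⟩ | h | h⟩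
  · exact absurd hb (by simp)
  · exact h
  · exact absurd h (by simp [uu])

lemma map_mem_ext_edgeSet (G : SimpleGraph V) {e : Sym2 V} (he : e ∈ G.edgeSet) :
    Sym2.map Sum.inl e ∈ (extG G).edgeSet := by
  induction e with
  | _ a b =>
    rw [Sym2.map_pair_eq, SimpleGraph.mem_edgeSet, ext_adj_inl_inl]
    exact he

/-- every edge of extG either contains uu or is a copy of a G-edge -/
lemma ext_edge_cases (G : SimpleGraph V) {e : Sym2 (V ⊕ (Unit ⊕ Fin (Fintype.card V + 2)))}
    (he : e ∈ (extG G).edgeSet) :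
    uu V ∈ e ∨ ∃ a b, e = s(Sum.inl a, Sum.inl b) ∧ G.Adj a b := by
  induction e with
  | _ x y =>
    rw [SimpleGraph.mem_edgeSet, ext_adj_iff] at he
    rcases he with ⟨hne, ⟨a, b, rfl, rfl, hab⟩ | rfl | rfl⟩
    · exact Or.inr ⟨a, b, rfl, hab⟩
    · exact Or.inl (Sym2.mem_mk_left _ _)
    · exact Or.inl (Sym2.mem_mk_right _ _)

/-- an extG-edge containing `Sum.inl c` is either a G-edge copy at c, or the edge to uu -/
lemma ext_edge_at_inl (G : SimpleGraph V) {e : Sym2 (V ⊕ (Unit ⊕ Fin (Fintype.card V + 2)))}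
    (he : e ∈ (extG G).edgeSet) {c : V} (hc : Sum.inl c ∈ e) :
    (∃ d, e = s(Sum.inl c, Sum.inl d) ∧ G.Adj c d) ∨ e = s(uu V, Sum.inl c) := by
  induction e with
  | _ x y =>
    rw [SimpleGraph.mem_edgeSet] at he
    have key : ∀ z : V ⊕ (Unit ⊕ Fin (Fintype.card V + 2)), (extG G).Adj (Sum.inl c) z →
        (∃ d, s(Sum.inl c, z) = s(Sum.inl c, Sum.inl d) ∧ G.Adj c d) ∨
          s(Sum.inl c, z) = s(uu V, Sum.inl c) := by
      intro z hz
      rw [ext_adj_iff] at hz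
      rcases hz with ⟨hne, ⟨a, b, ha, rfl, hab⟩ | h | rfl⟩
      · cases ha
        exact Or.inl ⟨b, rfl, hab⟩
      · exact absurd h (by simp [uu])
      · exact Or.inr (Sym2.eq_swap)
    rcases Sym2.mem_iff.mp hc with rfl | rfl
    · exact key y he
    · have := key x he.symm
      rwa [Sym2.eq_swap (a := Sum.inl c) (b := x)] at this


set_option maxHeartbeats 1000000 in
/-- `G` has an edge dominating set of size `k` iff `G'` (universal vertex `u` plus
`|V| + 2` leaves on `u`) has a mixed dominating set of size `k + 1`. -/
theorem stmt14 (G : SimpleGraph V) (k : ℕ) :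
    (∃ M : Finset (Sym2 V), IsEDS G M ∧ M.card ≤ k) ↔
    (∃ (D : Finset (V ⊕ (Unit ⊕ Fin (Fintype.card V + 2))))
       (M' : Finset (Sym2 (V ⊕ (Unit ⊕ Fin (Fintype.card V + 2))))),
      IsMDS (extG G) D M' ∧ D.card + M'.card ≤ k + 1) := by
  classical
  constructor
  · rintro ⟨M, ⟨hME, hMD⟩, hCard⟩
    refine ⟨{uu V}, M.image (Sym2.map Sum.inl), ⟨?_, ?_, ?_⟩, ?_⟩
    · intro e' he'
      obtain ⟨e, heM, rfl⟩ := Finset.mem_image.mp he'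
      exact map_mem_ext_edgeSet G (hME e heM)
    · intro v hv _
      refine ⟨uu V, Finset.mem_singleton_self _, ext_adj_uu G v ?_⟩
      intro h
      exact hv (by simp [h])
    · intro e' he' hne
      rcases ext_edge_cases G he' with hu | ⟨a, b, rfl, hab⟩
      · exact ⟨uu V, hu, Or.inl (Finset.mem_singleton_self _)⟩
      · obtain ⟨f, hfM, v, hve, hvf⟩ := hMD s(a, b) (G.mem_edgeSet.mpr hab)
        refine ⟨Sum.inl v, ?_, Or.inr ?_⟩
        · rw [← Sym2.map_pair_eq]
          exact Sym2.mem_map.mpr ⟨v, hve, rfl⟩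
        · exact mem_mVerts.mpr ⟨Sym2.map Sum.inl f,
            Finset.mem_image_of_mem _ hfM, Sym2.mem_map.mpr ⟨v, hvf, rfl⟩⟩
    · calc ({uu V} : Finset _).card + (M.image (Sym2.map Sum.inl)).card
          ≤ 1 + M.card := by
            simp only [Finset.card_singleton]
            exact Nat.add_le_add_left (Finset.card_image_le) 1
        _ ≤ k + 1 := by omega
  · rintro ⟨D, M', ⟨h1, h2, h3⟩, hCard⟩
    -- the edge-picking function
    set f : V → Sym2 V := fun a =>
      if h : ∃ b, G.Adj a b then s(a, h.choose) else s(a, a) with hf_def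
    have hf : ∀ a : V, (∃ b, G.Adj a b) → f a ∈ G.edgeSet ∧ a ∈ f a := by
      intro a h
      simp only [hf_def, dif_pos h]
      exact ⟨G.mem_edgeSet.mpr h.choose_spec, Sym2.mem_mk_left _ _⟩
    by_cases hk : Fintype.card V ≤ k
    · -- easy case: pick one incident edge per covered vertex
      set T : Finset V := Finset.univ.filter
        (fun a => (Sum.inl a ∈ D ∨ Sum.inl a ∈ mVerts M') ∧ ∃ b, G.Adj a b) with hT_def
      refine ⟨T.image f, ⟨?_, ?_⟩, ?_⟩
      · intro e he
        obtain ⟨a, haT, rfl⟩ := Finset.mem_image.mp he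
        exact (hf a ((Finset.mem_filter.mp haT).2.2)).1
      · intro e he
        induction e with
        | _ a b =>
          have hab : G.Adj a b := G.mem_edgeSet.mp he
          have hcopy : s(Sum.inl a, Sum.inl b) ∈ (extG G).edgeSet := by
            rw [SimpleGraph.mem_edgeSet, ext_adj_inl_inl]; exact hab
          have key : ∃ c : V, c ∈ s(a, b) ∧ (Sum.inl c ∈ D ∨ Sum.inl c ∈ mVerts M') := by
            by_cases hm : s(Sum.inl a, Sum.inl b) ∈ M'
            · exact ⟨a, Sym2.mem_mk_left _ _, Or.inr (mem_mVerts.mpr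
                ⟨_, hm, Sym2.mem_mk_left _ _⟩)⟩
            · obtain ⟨x, hxe, hx⟩ := h3 _ hcopy hm
              rcases Sym2.mem_iff.mp hxe with rfl | rfl
              · exact ⟨a, Sym2.mem_mk_left _ _, hx⟩
              · exact ⟨b, Sym2.mem_mk_right _ _, hx⟩
          obtain ⟨c, hce, hc⟩ := key
          have hcadj : ∃ d, G.Adj c d := by
            rcases Sym2.mem_iff.mp hce with rfl | rfl
            exacts [⟨b, hab⟩, ⟨a, hab.symm⟩]
          have hcT : c ∈ T := Finset.mem_filter.mpr ⟨Finset.mem_univ _, hc, hcadj⟩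
          exact ⟨f c, Finset.mem_image_of_mem _ hcT, c, hce, (hf c hcadj).2⟩
      · calc (T.image f).card ≤ T.card := Finset.card_image_le
          _ ≤ (Finset.univ : Finset V).card := Finset.card_le_card (Finset.filter_subset _ _)
          _ = Fintype.card V := Finset.card_univ
          _ ≤ k := hk
    · -- main case: k < card V, so uu ∈ D is forced
      push_neg at hk
      have huD : uu V ∈ D := by
        by_contra huD
        have hleaf : ∀ ℓ : Fin (Fintype.card V + 2),
            Sum.inr (Sum.inr ℓ) ∈ D ∨ s(Sum.inr (Sum.inr ℓ), uu V) ∈ M' := by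
          intro ℓ
          set w : V ⊕ (Unit ⊕ Fin (Fintype.card V + 2)) := Sum.inr (Sum.inr ℓ) with hw
          by_cases hD : w ∈ D
          · exact Or.inl hD
          by_cases hm : w ∈ mVerts M'
          · obtain ⟨e, heM', hwe⟩ := mem_mVerts.mp hm
            have heE := h1 e heM'
            right
            -- e must be the edge s(w, uu V)
            induction e with
            | _ x y =>
              have hadj : (extG G).Adj x y := (extG G).mem_edgeSet.mp heE
              rcases Sym2.mem_iff.mp hwe with rfl | rfl
              · have := ext_adj_leaf G hadj.symm
                rwa [this] at heM'
              · have := ext_adj_leaf G hadj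
                rw [this, Sym2.eq_swap] at heM'
                exact heM'
          · obtain ⟨d, hdD, hadj⟩ := h2 w hD hm
            have : d = uu V := ext_adj_leaf G hadj
            rw [this] at hdD
            exact absurd hdD huD
        -- injection from the leaves into D ⊕ M'
        set F : Fin (Fintype.card V + 2) →
            (V ⊕ (Unit ⊕ Fin (Fintype.card V + 2))) ⊕
              Sym2 (V ⊕ (Unit ⊕ Fin (Fintype.card V + 2))) := fun ℓ =>
          if Sum.inr (Sum.inr ℓ) ∈ D then Sum.inl (Sum.inr (Sum.inr ℓ))
          else Sum.inr s(Sum.inr (Sum.inr ℓ), uu V) with hF_def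
        have hmem : ∀ ℓ ∈ (Finset.univ : Finset (Fin (Fintype.card V + 2))),
            F ℓ ∈ D.disjSum M' := by
          intro ℓ _
          simp only [hF_def]
          split_ifs with h
          · exact Finset.inl_mem_disjSum.mpr h
          · exact Finset.inr_mem_disjSum.mpr ((hleaf ℓ).resolve_left h)
        have hinj : Set.InjOn F (Finset.univ : Finset (Fin (Fintype.card V + 2))) := by
          intro ℓ _ ℓ' _ h
          simp only [hF_def] at h
          split_ifs at h with h1' h2'
          · simpa using h
          · simp only [Sum.inr.injEq] at h
            rcases Sym2.eq_iff.mp h with ⟨h', _⟩ | ⟨h', _⟩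
            · simpa using h'
            · exact absurd h' (by simp [uu])
        have hcard := Finset.card_le_card_of_injOn F hmem hinj
        rw [Finset.card_univ, Fintype.card_fin, Finset.card_disjSum] at hcard
        omega
      -- construct the edge dominating set
      set M₁ : Finset (Sym2 V) := G.edgeFinset.filter
        (fun e => Sym2.map Sum.inl e ∈ M') with hM1_def
      set A : Finset V := Finset.univ.filter
        (fun a => (Sum.inl a ∈ D ∨ s(uu V, Sum.inl a) ∈ M') ∧ ∃ b, G.Adj a b) with hA_def
      refine ⟨M₁ ∪ A.image f, ⟨?_, ?_⟩, ?_⟩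
      · intro e he
        rcases Finset.mem_union.mp he with h | h
        · exact SimpleGraph.mem_edgeFinset.mp (Finset.mem_filter.mp h).1
        · obtain ⟨a, haA, rfl⟩ := Finset.mem_image.mp h
          exact (hf a ((Finset.mem_filter.mp haA).2.2)).1
      · intro e he
        induction e with
        | _ a b =>
          have hab : G.Adj a b := G.mem_edgeSet.mp he
          have hcopy : s(Sum.inl a, Sum.inl b) ∈ (extG G).edgeSet := by
            rw [SimpleGraph.mem_edgeSet, ext_adj_inl_inl]; exact hab
          -- main helper: from a covered endpoint c, produce a dominating edge
          have main : ∀ c d : V, G.Adj c d → (Sum.inl c ∈ D ∨ Sum.inl c ∈ mVerts M') →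
              ∃ g ∈ M₁ ∪ A.image f, c ∈ g := by
            intro c d hcd hc
            rcases hc with hcD | hcm
            · have hcA : c ∈ A := Finset.mem_filter.mpr
                ⟨Finset.mem_univ _, Or.inl hcD, ⟨d, hcd⟩⟩
              exact ⟨f c, Finset.mem_union_right _ (Finset.mem_image_of_mem _ hcA),
                (hf c ⟨d, hcd⟩).2⟩
            · obtain ⟨e'', he''M, hce''⟩ := mem_mVerts.mp hcm
              rcases ext_edge_at_inl G (h1 e'' he''M) hce'' with ⟨d', rfl, hcd'⟩ | rfl
              · refine ⟨s(c, d'), Finset.mem_union_left _ ?_, Sym2.mem_mk_left _ _⟩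
                refine Finset.mem_filter.mpr ⟨SimpleGraph.mem_edgeFinset.mpr ?_, ?_⟩
                · exact G.mem_edgeSet.mpr hcd'
                · rw [Sym2.map_pair_eq]; exact he''M
              · have hcA : c ∈ A := Finset.mem_filter.mpr
                  ⟨Finset.mem_univ _, Or.inr he''M, ⟨d, hcd⟩⟩
                exact ⟨f c, Finset.mem_union_right _ (Finset.mem_image_of_mem _ hcA),
                  (hf c ⟨d, hcd⟩).2⟩
          by_cases hm : s(Sum.inl a, Sum.inl b) ∈ M'
          · refine ⟨s(a, b), Finset.mem_union_left _ ?_, a, Sym2.mem_mk_left _ _,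
              Sym2.mem_mk_left _ _⟩
            refine Finset.mem_filter.mpr ⟨SimpleGraph.mem_edgeFinset.mpr he, ?_⟩
            rw [Sym2.map_pair_eq]; exact hm
          · obtain ⟨x, hxe, hx⟩ := h3 _ hcopy hm
            rcases Sym2.mem_iff.mp hxe with rfl | rfl
            · obtain ⟨g, hg, hag⟩ := main a b hab hx
              exact ⟨g, hg, a, Sym2.mem_mk_left _ _, hag⟩
            · obtain ⟨g, hg, hbg⟩ := main b a hab.symm hx
              exact ⟨g, hg, b, Sym2.mem_mk_right _ _, hbg⟩
      · -- cardinality bound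
        -- injection from M₁ ⊕ A into M' ⊕ (D.erase uu)
        set H : Sym2 V ⊕ V →
            Sym2 (V ⊕ (Unit ⊕ Fin (Fintype.card V + 2))) ⊕
              (V ⊕ (Unit ⊕ Fin (Fintype.card V + 2))) := fun x =>
          match x with
          | Sum.inl e => Sum.inl (Sym2.map Sum.inl e)
          | Sum.inr a =>
            if Sum.inl a ∈ D then Sum.inr (Sum.inl a) else Sum.inl s(uu V, Sum.inl a)
          with hH_def
        have hmem : ∀ x ∈ M₁.disjSum A, H x ∈ M'.disjSum (D.erase (uu V)) := by
          rintro (e | a) hx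
          · have he : e ∈ M₁ := Finset.inl_mem_disjSum.mp hx
            exact Finset.inl_mem_disjSum.mpr (Finset.mem_filter.mp he).2
          · have ha : a ∈ A := Finset.inr_mem_disjSum.mp hx
            simp only [hH_def]
            split_ifs with h
            · exact Finset.inr_mem_disjSum.mpr
                (Finset.mem_erase.mpr ⟨by simp [uu], h⟩)
            · exact Finset.inl_mem_disjSum.mpr
                (((Finset.mem_filter.mp ha).2.1).resolve_left h)
        have huu_not_mem_map : ∀ e : Sym2 V, uu V ∉ Sym2.map Sum.inl e := by
          intro e h
          obtain ⟨a, _, ha⟩ := Sym2.mem_map.mp h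
          exact absurd ha (by simp [uu])
        have hinj : Set.InjOn H (M₁.disjSum A : Finset _) := by
          rintro (e | a) _ (e' | a') _ h
          · simp only [hH_def, Sum.inl.injEq] at h
            rw [Sym2.map.injective Sum.inl_injective h]
          · simp only [hH_def] at h
            split_ifs at h with h'
            all_goals simp only [Sum.inl.injEq, Sum.inr.injEq, reduceCtorEq] at h
            exact absurd (h ▸ Sym2.mem_mk_left (uu V) (Sum.inl a')) (huu_not_mem_map e)
          · simp only [hH_def] at h
            split_ifs at h with h'
            all_goals simp only [Sum.inl.injEq, Sum.inr.injEq, reduceCtorEq] at h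
            exact absurd (h.symm ▸ Sym2.mem_mk_left (uu V) (Sum.inl a)) (huu_not_mem_map e')
          · simp only [hH_def] at h
            split_ifs at h with h1' h2'
            all_goals simp only [Sum.inl.injEq, Sum.inr.injEq, reduceCtorEq] at h
            · rw [h]
            · rcases Sym2.eq_iff.mp h with ⟨_, h'⟩ | ⟨h', _⟩
              · simpa using h'
              · exact absurd h' (by simp [uu])
        have hcard := Finset.card_le_card_of_injOn H hmem hinj
        rw [Finset.card_disjSum, Finset.card_disjSum, Finset.card_erase_of_mem huD] at hcard
        have hDpos : 1 ≤ D.card := Finset.card_pos.mpr ⟨uu V, huD⟩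
        have h4 : (M₁ ∪ A.image f).card ≤ M₁.card + (A.image f).card :=
          Finset.card_union_le _ _
        have h5 : (A.image f).card ≤ A.card := Finset.card_image_le
        omega
end

section
/- Let G = (V,E) be a graph with a nice mds partition V = D ∪ P ∪ I arising from nice mixed dominating set D ∪ M. Suppose u ∈ D and u has exactly two neighbors v₁, v₂ outside D ∪ P. If u' ∈ D is a vertex with u' ≠ u, then v₁ and v₂ are not both adjacent to u' — in fact, N(v₁) ∩ D = N(v₂) ∩ D = {u}. -/
variable {V : Type*} [Fintype V] [DecidableEq V]

/-- In a nice mds partition, if `u ∈ D` has exactly two neighbors `v₁, v₂` outside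
`D ∪ P`, then `N(v₁) ∩ D = N(v₂) ∩ D = {u}`; in particular no other `u' ∈ D` is
adjacent to both `v₁` and `v₂`. -/
theorem stmt15 (G : SimpleGraph V) (D : Finset V) (M : Finset (Sym2 V))
    (h : IsNiceMDS G D M) (u : V) (hu : u ∈ D) (v₁ v₂ : V) (hne : v₁ ≠ v₂)
    (h1 : G.Adj u v₁) (h2 : G.Adj u v₂)
    (hv₁ : v₁ ∉ D ∧ v₁ ∉ mVerts M) (hv₂ : v₂ ∉ D ∧ v₂ ∉ mVerts M)
    (honly : ∀ w : V, G.Adj u w → w ∉ D → w ∉ mVerts M → w = v₁ ∨ w = v₂) :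
    ∀ w ∈ D, (G.Adj w v₁ → w = u) ∧ (G.Adj w v₂ → w = u) := by
  obtain ⟨_, _, hpriv⟩ := h
  obtain ⟨p₁, p₂, hpne, hp₁, hp₂⟩ := hpriv u hu
  have e₁ : p₁ = v₁ ∨ p₁ = v₂ := honly p₁ hp₁.2.2.1 hp₁.1 hp₁.2.1
  have e₂ : p₂ = v₁ ∨ p₂ = v₂ := honly p₂ hp₂.2.2.1 hp₂.1 hp₂.2.1
  have key : PrivNbr G D M u v₁ ∧ PrivNbr G D M u v₂ := by
    rcases e₁ with rfl | rfl <;> rcases e₂ with rfl | rfl <;>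
      first | exact absurd rfl hpne | exact ⟨hp₁, hp₂⟩ | exact ⟨hp₂, hp₁⟩
  intro w hw
  exact ⟨fun hadj => key.1.2.2.2 w hw hadj, fun hadj => key.2.2.2.2 w hw hadj⟩
end

section
/- Let V = D ∪ P ∪ I be a nice mds partition of a graph G from nice mixed dominating set D ∪ M, and let P' ⊆ P. If M' is a minimum edge cover of the induced subgraph G[P'], then |M'| ≤ |M|. -/
variable {V : Type*} [Fintype V] [DecidableEq V]

/-- If `V = D ∪ P ∪ I` is a nice mds partition of `G` coming from the nice mixed
dominating set `D ∪ M` (so `P = V(M)`), `P' ⊆ P`, and `M'` is a minimum edge cover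
of the induced subgraph `G[P']`, then `|M'| ≤ |M|`. -/
theorem stmt16 (G : SimpleGraph V) (D : Finset V) (M : Finset (Sym2 V))
    (h : IsNiceMDS G D M) (P' : Finset V) (hP' : P' ⊆ mVerts M)
    (M' : Finset (Sym2 V))
    (hM'E : ∀ e ∈ M', e ∈ G.edgeSet)
    (hM'in : ∀ e ∈ M', ∀ v : V, v ∈ e → v ∈ P')
    (hM'cov : ∀ v ∈ P', ∃ e ∈ M', v ∈ e)
    (hmin : ∀ M'' : Finset (Sym2 V), (∀ e ∈ M'', e ∈ G.edgeSet) →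
      (∀ e ∈ M'', ∀ v : V, v ∈ e → v ∈ P') → (∀ v ∈ P', ∃ e ∈ M'', v ∈ e) →
      M'.card ≤ M''.card) :
    M'.card ≤ M.card := by
  classical
  set f : Sym2 V → Sym2 V := fun e =>
    if hc : ∃ v, v ∈ e ∧ v ∈ P' ∧ ¬ (∀ w ∈ e, w ∈ P') then
      (hM'cov hc.choose hc.choose_spec.2.1).choose
    else e with hf
  set M'' : Finset (Sym2 V) := (M.image f).filter (fun e => ∀ w ∈ e, w ∈ P') with hM''
  have hE : ∀ e ∈ M'', e ∈ G.edgeSet := by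
    intro e he
    rw [hM'', Finset.mem_filter, Finset.mem_image] at he
    obtain ⟨⟨a, ha, rfl⟩, _⟩ := he
    rw [hf]
    by_cases hc : ∃ v, v ∈ a ∧ v ∈ P' ∧ ¬ (∀ w ∈ a, w ∈ P')
    · simp only [dif_pos hc]
      exact hM'E _ (hM'cov hc.choose hc.choose_spec.2.1).choose_spec.1
    · simp only [dif_neg hc]
      exact h.1.1 _ ha
  have hIn : ∀ e ∈ M'', ∀ v : V, v ∈ e → v ∈ P' := by
    intro e he v hv
    rw [hM'', Finset.mem_filter] at he
    exact he.2 v hv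
  have hCov : ∀ v ∈ P', ∃ e ∈ M'', v ∈ e := by
    intro v hvP
    have hvM : v ∈ mVerts M := hP' hvP
    rw [mVerts, Finset.mem_filter] at hvM
    obtain ⟨-, e, heM, hve⟩ := hvM
    by_cases hall : ∀ w ∈ e, w ∈ P'
    · refine ⟨e, ?_, hve⟩
      rw [hM'', Finset.mem_filter]
      refine ⟨Finset.mem_image.mpr ⟨e, heM, ?_⟩, hall⟩
      rw [hf]
      have hc : ¬ ∃ v, v ∈ e ∧ v ∈ P' ∧ ¬ (∀ w ∈ e, w ∈ P') := by
        rintro ⟨w, -, -, hw⟩; exact hw hall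
      simp only [dif_neg hc]
    · have hc : ∃ v, v ∈ e ∧ v ∈ P' ∧ ¬ (∀ w ∈ e, w ∈ P') := ⟨v, hve, hvP, hall⟩
      refine ⟨f e, ?_, ?_⟩
      · rw [hM'', Finset.mem_filter]
        constructor
        · exact Finset.mem_image.mpr ⟨e, heM, rfl⟩
        · intro w hw
          have : f e ∈ M' := by
            rw [hf]; simp only [dif_pos hc]
            exact (hM'cov hc.choose hc.choose_spec.2.1).choose_spec.1
          exact hM'in _ this w hw
      · -- the chosen vertex must be v
        have hch := hc.choose_spec
        have hveq : hc.choose = v := by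
          induction e using Sym2.ind with
          | _ a b =>
            push_neg at hall
            obtain ⟨w, hwab, hwP⟩ := hall
            rw [Sym2.mem_iff] at hve hwab
            have h1 := hch.1
            rw [Sym2.mem_iff] at h1
            rcases h1 with h1 | h1 <;> rcases hve with rfl | rfl <;>
              rcases hwab with rfl | rfl <;> first | rfl | (exfalso; exact hwP hvP) |
                (exfalso; exact hwP (h1 ▸ hch.2.1)) | (rw [h1])
        have : f e ∈ M' ∧ hc.choose ∈ f e := by
          rw [hf]; simp only [dif_pos hc]
          exact ⟨(hM'cov hc.choose hc.choose_spec.2.1).choose_spec.1,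
            (hM'cov hc.choose hc.choose_spec.2.1).choose_spec.2⟩
        rw [hveq] at this
        exact this.2
  calc M'.card ≤ M''.card := hmin M'' hE hIn hCov
    _ ≤ (M.image f).card := Finset.card_filter_le _ _
    _ ≤ M.card := Finset.card_image_le
end
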